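/- Let ω ≥ 1 and define ρ_B(s) = s^{−1} e^{−ω s} I_0(s) for s > 0, where I_0(s) = Σ_{m=0}^∞ (s/2)^{2m}/(m!)^2. Then ρ_B satisfies the regularity conditions for a normalized completely random measure: ∫_0^∞ min(1,s) ρ_B(s) ds < ∞ and ∫_0^∞ ρ_B(s) ds = +∞. -/

import Mathlib

open MeasureTheory Set
open scoped ENNReal

/-- The modified Bessel function of the first kind of order 0,
`I₀(s) = Σ_{m=0}^∞ (s/2)^{2m} / (m!)²`. -/
noncomputable def besselI0 (s : ℝ) : ℝ :=
  ∑' m : ℕ, (s / 2) ^ (2 * m) / ((Nat.factorial m : ℝ)) ^ 2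

/-! ### Auxiliary definitions and lemmas -/

/-- The `m`-th comparison function `g_m(s) = min(1,s) s⁻¹ e^{-s} s^{2m} / (4^m (m!)²)`. -/
noncomputable def besselG (m : ℕ) (s : ℝ) : ℝ :=
  min 1 s * s⁻¹ * Real.exp (-s) * s ^ (2*m) / (4^m * (m.factorial : ℝ)^2)

/-- The `m`-th bound `c_m = (2m-1)! / (4^m (m!)²)`. -/
noncomputable def besselC (m : ℕ) : ℝ :=
  (2*m-1).factorial / (4^m * (m.factorial : ℝ)^2)

lemma bessel_term_nonneg (s : ℝ) (m : ℕ) :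
    0 ≤ (s / 2) ^ (2 * m) / ((Nat.factorial m : ℝ)) ^ 2 :=
  div_nonneg ((even_two_mul m).pow_nonneg _) (by positivity)

lemma besselI0_summable (s : ℝ) :
    Summable (fun m : ℕ => (s / 2) ^ (2 * m) / ((Nat.factorial m : ℝ)) ^ 2) := by
  apply Summable.of_nonneg_of_le (bessel_term_nonneg s)
    (fun m => ?_) (Real.summable_pow_div_factorial ((s/2)^2))
  have hf : (1:ℝ) ≤ m.factorial := by exact_mod_cast Nat.one_le_iff_ne_zero.2 m.factorial_ne_zero
  rw [pow_mul]
  apply div_le_div_of_nonneg_left (by positivity) (by positivity)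
  nlinarith

lemma one_le_besselI0 (s : ℝ) : 1 ≤ besselI0 s := by
  have h := Summable.le_tsum (besselI0_summable s) 0 (fun i _ => bessel_term_nonneg s i)
  simpa [besselI0] using h

lemma centralBinom_sq_mul_le (m : ℕ) : m.centralBinom ^ 2 * (m + 1) ≤ 16 ^ m := by
  induction m with
  | zero => simp [Nat.centralBinom]
  | succ m ih =>
    have key : (m + 1) * (m+1).centralBinom = 2 * (2 * m + 1) * m.centralBinom :=
      Nat.succ_mul_centralBinom_succ m
    have h3 : 0 < (m+1)^3 := by positivity
    refine Nat.le_of_mul_le_mul_right ?_ h3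
    calc (m+1).centralBinom ^ 2 * (m + 1 + 1) * (m+1)^3
        = ((m+1) * (m+1).centralBinom)^2 * ((m + 2) * (m+1)) := by ring
      _ = (2 * (2*m+1) * m.centralBinom)^2 * ((m + 2) * (m+1)) := by rw [key]
      _ = (4 * (2*m+1)^2 * (m+2)) * (m.centralBinom^2 * (m+1)) := by ring
      _ ≤ (4 * (2*m+1)^2 * (m+2)) * 16^m := Nat.mul_le_mul_left _ ih
      _ ≤ (16 * (m+1)^3) * 16^m := Nat.mul_le_mul_right _ (by nlinarith)
      _ = 16 ^ (m+1) * (m+1)^3 := by ring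

lemma centralBinom_real_le (m : ℕ) :
    (m.centralBinom : ℝ) * Real.sqrt (m + 1) ≤ 4 ^ m := by
  have h : ((m.centralBinom : ℝ)) ^ 2 * (m + 1) ≤ (4 ^ m) ^ 2 := by
    have := centralBinom_sq_mul_le m
    have : ((m.centralBinom ^ 2 * (m + 1) : ℕ) : ℝ) ≤ ((16 ^ m : ℕ) : ℝ) := by exact_mod_cast this
    push_cast at this
    have h16 : (16:ℝ)^m = (4^m)^2 := by
      rw [show (16:ℝ) = 4^2 by norm_num, ← pow_mul, mul_comm, pow_mul]
    linarith
  have h1 : (m.centralBinom : ℝ) * Real.sqrt (m + 1)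
      = Real.sqrt ((m.centralBinom : ℝ)^2 * (m+1)) := by
    rw [Real.sqrt_mul (by positivity), Real.sqrt_sq (by positivity)]
  rw [h1]
  calc Real.sqrt ((m.centralBinom : ℝ)^2 * (m+1)) ≤ Real.sqrt ((4^m)^2) :=
        Real.sqrt_le_sqrt h
    _ = 4 ^ m := Real.sqrt_sq (by positivity)

lemma besselC_nonneg (m : ℕ) : 0 ≤ besselC m := by unfold besselC; positivity

lemma besselC_le (m : ℕ) (hm : 1 ≤ m) : besselC m ≤ ((m:ℝ)^(3/2:ℝ))⁻¹ := by
  have hm' : (1:ℝ) ≤ m := by exact_mod_cast hm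
  have hmpos : (0:ℝ) < m := by linarith
  have h1 := Nat.choose_mul_factorial_mul_factorial (show m ≤ 2*m by omega)
  rw [show 2*m-m = m by omega] at h1
  have h2 : (2*m) * (2*m-1).factorial = (2*m).factorial :=
    Nat.mul_factorial_pred (by omega)
  have hreal : (2*(m:ℝ)) * ((2*m-1).factorial : ℝ) = m.centralBinom * ((m.factorial:ℝ))^2 := by
    have : (2*m) * (2*m-1).factorial = m.centralBinom * (m.factorial * m.factorial) := by
      unfold Nat.centralBinom
      rw [h2, ← h1]; ring
    rw [sq]
    exact_mod_cast this
  have hc : besselC m = (m.centralBinom : ℝ) / (2*m*4^m) := by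
    have hf : (0:ℝ) < (m.factorial:ℝ) := by positivity
    unfold besselC
    rw [div_eq_div_iff (by positivity) (by positivity)]
    linear_combination (4:ℝ)^m * hreal
  have hsq : Real.sqrt m ≤ Real.sqrt (m+1) := Real.sqrt_le_sqrt (by linarith)
  have hsm : (1:ℝ) ≤ Real.sqrt m := by
    rw [show (1:ℝ) = Real.sqrt 1 by simp]; exact Real.sqrt_le_sqrt hm'
  have hpow : ((m:ℝ)^(3/2:ℝ)) = m * Real.sqrt m := by
    rw [show (3/2:ℝ) = 1 + 1/2 by norm_num, Real.rpow_add hmpos, Real.rpow_one,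
      ← Real.sqrt_eq_rpow]
  rw [hc, hpow, div_le_iff₀ (by positivity), inv_mul_eq_div, le_div_iff₀ (by positivity)]
  calc (m.centralBinom:ℝ) * (m * Real.sqrt m)
      ≤ (m.centralBinom:ℝ) * (m * Real.sqrt (m+1)) := by
        apply mul_le_mul_of_nonneg_left (mul_le_mul_of_nonneg_left hsq (by positivity))
          (by positivity)
    _ = m * ((m.centralBinom:ℝ) * Real.sqrt (m+1)) := by ring
    _ ≤ m * 4^m := mul_le_mul_of_nonneg_left (centralBinom_real_le m) (by positivity)
    _ ≤ 2*m*4^m := by nlinarith [pow_pos (show (0:ℝ) < 4 by norm_num) m]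

lemma besselC_summable : Summable besselC := by
  rw [← summable_nat_add_iff 1]
  apply Summable.of_nonneg_of_le (fun m => besselC_nonneg _)
    (fun m => ?_) (((summable_nat_add_iff 1).mpr
      (Real.summable_one_div_nat_rpow.mpr (by norm_num : (1:ℝ) < 3/2))).congr
      (fun m => by rw [one_div]))
  exact_mod_cast besselC_le (m+1) (by omega)

lemma lintegral_exp_neg_pow (n : ℕ) :
    ∫⁻ s in Ioi (0:ℝ), ENNReal.ofReal (Real.exp (-s) * s ^ n)
      = ENNReal.ofReal (n.factorial) := by
  have hint : IntegrableOn (fun x : ℝ => Real.exp (-x) * x ^ n) (Ioi 0) := by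
    have := Real.GammaIntegral_convergent (s := n + 1) (by positivity)
    refine this.congr_fun (fun x hx => ?_) measurableSet_Ioi
    rw [add_sub_cancel_right]
    simp only [Real.rpow_natCast]
  rw [← MeasureTheory.ofReal_integral_eq_lintegral_ofReal hint]
  · congr 1
    have h := Real.Gamma_eq_integral (s := (n:ℝ) + 1) (by positivity)
    rw [Real.Gamma_nat_eq_factorial] at h
    rw [h]
    apply setIntegral_congr_fun measurableSet_Ioi
    intro x hx
    simp [Real.rpow_natCast]
  · filter_upwards [ae_restrict_mem measurableSet_Ioi] with x hx
    have := le_of_lt (mem_Ioi.mp hx)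
    positivity

lemma besselG_key {s : ℝ} (hs : 0 < s) (m : ℕ) :
    min 1 s * s⁻¹ * s ^ (2*m) ≤ s ^ (2*m-1) := by
  cases m with
  | zero =>
    simp only [Nat.mul_zero, pow_zero, mul_one, Nat.zero_sub]
    calc min 1 s * s⁻¹ ≤ s * s⁻¹ := mul_le_mul_of_nonneg_right (min_le_right _ _)
          (by positivity)
      _ = 1 := mul_inv_cancel₀ hs.ne'
  | succ k =>
    have h1 : 2*(k+1) - 1 = 2*k+1 := by omega
    have h2 : 2*(k+1) = (2*k+1) + 1 := by omega
    rw [h1, h2, pow_succ]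
    calc min 1 s * s⁻¹ * (s ^ (2*k+1) * s)
        = min 1 s * (s⁻¹ * s) * s ^ (2*k+1) := by ring
      _ = min 1 s * s ^ (2*k+1) := by rw [inv_mul_cancel₀ hs.ne', mul_one]
      _ ≤ 1 * s ^ (2*k+1) := mul_le_mul_of_nonneg_right (min_le_left _ _) (by positivity)
      _ = s ^ (2*k+1) := one_mul _

lemma besselG_lintegral_le (m : ℕ) :
    ∫⁻ s in Ioi (0:ℝ), ENNReal.ofReal (besselG m s) ≤ ENNReal.ofReal (besselC m) := by
  have hD : (0:ℝ) < 4^m * (m.factorial : ℝ)^2 := by positivity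
  calc ∫⁻ s in Ioi (0:ℝ), ENNReal.ofReal (besselG m s)
      ≤ ∫⁻ s in Ioi (0:ℝ), ENNReal.ofReal ((4^m * (m.factorial : ℝ)^2)⁻¹)
          * ENNReal.ofReal (Real.exp (-s) * s ^ (2*m-1)) := by
        apply setLIntegral_mono' measurableSet_Ioi
        intro s hs
        rw [← ENNReal.ofReal_mul (by positivity)]
        apply ENNReal.ofReal_le_ofReal
        unfold besselG
        rw [inv_mul_eq_div]
        rw [div_le_div_iff_of_pos_right hD]
        calc min 1 s * s⁻¹ * Real.exp (-s) * s ^ (2*m)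
            = Real.exp (-s) * (min 1 s * s⁻¹ * s ^ (2*m)) := by ring
          _ ≤ Real.exp (-s) * s ^ (2*m-1) :=
              mul_le_mul_of_nonneg_left (besselG_key hs m) (Real.exp_nonneg _)
    _ = ENNReal.ofReal ((4^m * (m.factorial : ℝ)^2)⁻¹)
          * ∫⁻ s in Ioi (0:ℝ), ENNReal.ofReal (Real.exp (-s) * s ^ (2*m-1)) :=
        lintegral_const_mul' _ _ ENNReal.ofReal_ne_top
    _ = ENNReal.ofReal (besselC m) := by
        rw [lintegral_exp_neg_pow, ← ENNReal.ofReal_mul (by positivity)]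
        congr 1
        unfold besselC
        field_simp

lemma besselG_measurable (m : ℕ) :
    Measurable (fun s : ℝ => ENNReal.ofReal (besselG m s)) := by
  apply Measurable.ennreal_ofReal
  unfold besselG
  fun_prop

lemma pointwise_tsum_bound {ω : ℝ} (hω : 1 ≤ ω) {s : ℝ} (hs : 0 < s) :
    ENNReal.ofReal (min 1 s * (s⁻¹ * Real.exp (-ω * s) * besselI0 s))
      ≤ ∑' m, ENNReal.ofReal (besselG m s) := by
  have hK : 0 ≤ min 1 s * (s⁻¹ * Real.exp (-ω * s)) := by positivity
  have heq : min 1 s * (s⁻¹ * Real.exp (-ω * s) * besselI0 s)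
      = ∑' m : ℕ, min 1 s * (s⁻¹ * Real.exp (-ω * s))
          * ((s / 2) ^ (2 * m) / ((Nat.factorial m : ℝ)) ^ 2) := by
    rw [tsum_mul_left]
    unfold besselI0
    ring
  rw [heq, ENNReal.ofReal_tsum_of_nonneg
    (fun m => mul_nonneg hK (bessel_term_nonneg s m))
    ((besselI0_summable s).mul_left _)]
  apply ENNReal.tsum_le_tsum
  intro m
  apply ENNReal.ofReal_le_ofReal
  have hterm : min 1 s * (s⁻¹ * Real.exp (-ω * s))
        * ((s / 2) ^ (2 * m) / ((Nat.factorial m : ℝ)) ^ 2)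
      = min 1 s * s⁻¹ * Real.exp (-ω * s) * s ^ (2*m) / (4^m * (m.factorial : ℝ)^2) := by
    rw [div_pow, show (2:ℝ)^(2*m) = 4^m by rw [pow_mul]; norm_num]
    ring
  rw [hterm]
  unfold besselG
  have hexp : Real.exp (-ω * s) ≤ Real.exp (-s) := by
    apply Real.exp_le_exp.mpr
    nlinarith
  have hmin : (0:ℝ) ≤ min 1 s * s⁻¹ := mul_nonneg (le_min zero_le_one hs.le) (inv_nonneg.mpr hs.le)
  rw [div_le_div_iff_of_pos_right (by positivity)]
  exact mul_le_mul_of_nonneg_right (mul_le_mul_of_nonneg_left hexp hmin)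
    ((even_two_mul m).pow_nonneg s)

lemma lintegral_inv_Ioo_top : ∫⁻ s in Ioo (0:ℝ) 1, ENNReal.ofReal s⁻¹ = ⊤ := by
  by_contra h
  have hfin : HasFiniteIntegral (fun x : ℝ => x⁻¹) (volume.restrict (Ioo 0 1)) := by
    rw [hasFiniteIntegral_iff_ofReal]
    · exact Ne.lt_top h
    · filter_upwards [ae_restrict_mem measurableSet_Ioo] with x hx
      exact inv_nonneg.mpr hx.1.le
  have hint : IntegrableOn (fun x : ℝ => x⁻¹) (Ioo 0 1) :=
    ⟨measurable_inv.aestronglyMeasurable, hfin⟩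
  have hint' : IntegrableOn (fun x : ℝ => x ^ (-1 : ℝ)) (Ioo (0:ℝ) 1) :=
    hint.congr_fun (fun x hx => (Real.rpow_neg_one x).symm) measurableSet_Ioo
  have := (intervalIntegral.integrableOn_Ioo_rpow_iff zero_lt_one).mp hint'
  linarith

/-- For `ω ≥ 1` the Bessel intensity `ρ_B(s) = s⁻¹ e^{-ωs} I₀(s)` satisfies
the regularity conditions for a normalized completely random measure:
`∫₀^∞ min(1,s) ρ_B(s) ds < ∞` and `∫₀^∞ ρ_B(s) ds = +∞`. -/
theorem besselIntensity_regularity (ω : ℝ) (hω : 1 ≤ ω) :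
    (∫⁻ s in Set.Ioi (0:ℝ),
        ENNReal.ofReal (min 1 s * (s⁻¹ * Real.exp (-ω * s) * besselI0 s)) < ⊤) ∧
    (∫⁻ s in Set.Ioi (0:ℝ),
        ENNReal.ofReal (s⁻¹ * Real.exp (-ω * s) * besselI0 s) = ⊤) := by
  constructor
  · calc ∫⁻ s in Set.Ioi (0:ℝ),
        ENNReal.ofReal (min 1 s * (s⁻¹ * Real.exp (-ω * s) * besselI0 s))
        ≤ ∫⁻ s in Set.Ioi (0:ℝ), ∑' m, ENNReal.ofReal (besselG m s) :=
          setLIntegral_mono' measurableSet_Ioi (fun s hs => pointwise_tsum_bound hω hs)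
      _ = ∑' m, ∫⁻ s in Set.Ioi (0:ℝ), ENNReal.ofReal (besselG m s) :=
          lintegral_tsum (fun m => (besselG_measurable m).aemeasurable)
      _ ≤ ∑' m, ENNReal.ofReal (besselC m) := ENNReal.tsum_le_tsum besselG_lintegral_le
      _ = ENNReal.ofReal (∑' m, besselC m) :=
          (ENNReal.ofReal_tsum_of_nonneg besselC_nonneg besselC_summable).symm
      _ < ⊤ := ENNReal.ofReal_lt_top
  · rw [eq_top_iff]
    calc (⊤:ℝ≥0∞) = ENNReal.ofReal (Real.exp (-ω)) * ∫⁻ s in Ioo (0:ℝ) 1,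
            ENNReal.ofReal s⁻¹ := by
          rw [lintegral_inv_Ioo_top, ENNReal.mul_top
            (by simpa using Real.exp_pos (-ω) : ENNReal.ofReal (Real.exp (-ω)) ≠ 0)]
      _ = ∫⁻ s in Ioo (0:ℝ) 1, ENNReal.ofReal (Real.exp (-ω)) * ENNReal.ofReal s⁻¹ := by
          rw [lintegral_const_mul' _ _ ENNReal.ofReal_ne_top]
      _ ≤ ∫⁻ s in Ioo (0:ℝ) 1, ENNReal.ofReal (s⁻¹ * Real.exp (-ω * s) * besselI0 s) := by
          apply setLIntegral_mono' measurableSet_Ioo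
          intro s hs
          rw [← ENNReal.ofReal_mul (Real.exp_nonneg _)]
          apply ENNReal.ofReal_le_ofReal
          have hs0 : 0 < s := hs.1
          have hexp : Real.exp (-ω) ≤ Real.exp (-ω * s) := by
            apply Real.exp_le_exp.mpr
            nlinarith [hs.2]
          have hI := one_le_besselI0 s
          calc Real.exp (-ω) * s⁻¹ ≤ Real.exp (-ω * s) * s⁻¹ :=
                mul_le_mul_of_nonneg_right hexp (by positivity)
            _ = s⁻¹ * Real.exp (-ω * s) * 1 := by ring
            _ ≤ s⁻¹ * Real.exp (-ω * s) * besselI0 s := by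
                apply mul_le_mul_of_nonneg_left hI (by positivity)
      _ ≤ ∫⁻ s in Set.Ioi (0:ℝ), ENNReal.ofReal (s⁻¹ * Real.exp (-ω * s) * besselI0 s) :=
          lintegral_mono_set (fun x hx => hx.1)
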